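/- Let f be L-smooth and μ-strongly convex, let x_1,...,x_N ∈ R^d, x̄ = (1/N)∑x_i, g_i = ∇f(x_i), and ḡ = (1/N)∑g_i. Then ∑_{i=1}^N ‖g_i − ḡ‖² ≤ 2L ∑_{i=1}^N ⟨g_i, x_i − x̄⟩. -/

import Mathlib

open Finset

section aux

variable {d : ℕ}

lemma line_hasDerivAt (f : EuclideanSpace ℝ (Fin d) → ℝ) (hdiff : ContDiff ℝ 1 f)
    (a v : EuclideanSpace ℝ (Fin d)) (t : ℝ) :
    HasDerivAt (fun s : ℝ => f (a + s • v)) (inner ℝ (gradient f (a + t • v)) v : ℝ) t := by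
  have hdf : DifferentiableAt ℝ f (a + t • v) := (hdiff.differentiable one_ne_zero) _
  have h1 : HasDerivAt (fun s : ℝ => a + s • v) v t := by
    simpa using ((hasDerivAt_id t).smul_const v).const_add a
  have := hdf.hasGradientAt.hasFDerivAt.comp_hasDerivAt t h1
  simpa [InnerProductSpace.toDual_apply_apply, Function.comp_def] using this

lemma descent (f : EuclideanSpace ℝ (Fin d) → ℝ) (L : ℝ) (hL : 0 < L)
    (hdiff : ContDiff ℝ 1 f)
    (hlip : ∀ x y, ‖gradient f x - gradient f y‖ ≤ L * ‖x - y‖)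
    (a b : EuclideanSpace ℝ (Fin d)) :
    f b ≤ f a + inner ℝ (gradient f a) (b - a) + L / 2 * ‖b - a‖ ^ 2 := by
  set v := b - a with hv
  have hgradcont : Continuous (gradient f) := by
    have := hdiff.continuous_fderiv one_ne_zero
    exact (InnerProductSpace.toDual ℝ (EuclideanSpace ℝ (Fin d))).symm.continuous.comp this
  have hcont : Continuous (fun t : ℝ => (inner ℝ (gradient f (a + t • v)) v : ℝ)) := by
    exact (hgradcont.comp (continuous_const.add (continuous_id.smul continuous_const))).inner
      continuous_const
  have ftc : f (a + (1:ℝ) • v) - f (a + (0:ℝ) • v)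
      = ∫ t in (0:ℝ)..1, (inner ℝ (gradient f (a + t • v)) v : ℝ) := by
    refine (intervalIntegral.integral_eq_sub_of_hasDerivAt
      (fun t _ => line_hasDerivAt f hdiff a v t) (hcont.intervalIntegrable _ _)).symm
  have hbound : ∀ t ∈ Set.Icc (0:ℝ) 1,
      (inner ℝ (gradient f (a + t • v)) v : ℝ) ≤ inner ℝ (gradient f a) v + L * t * ‖v‖ ^ 2 := by
    intro t ht
    have h1 : (inner ℝ (gradient f (a + t • v)) v : ℝ) - inner ℝ (gradient f a) v
        = inner ℝ (gradient f (a + t • v) - gradient f a) v := by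
      rw [inner_sub_left]
    have h2 : ‖gradient f (a + t • v) - gradient f a‖ ≤ L * (t * ‖v‖) := by
      have := hlip (a + t • v) a
      simpa [norm_smul, abs_of_nonneg ht.1] using this
    have h3 : (inner ℝ (gradient f (a + t • v) - gradient f a) v : ℝ)
        ≤ ‖gradient f (a + t • v) - gradient f a‖ * ‖v‖ := real_inner_le_norm _ _
    nlinarith [norm_nonneg v, mul_le_mul_of_nonneg_right h2 (norm_nonneg v)]
  have hintle : (∫ t in (0:ℝ)..1, (inner ℝ (gradient f (a + t • v)) v : ℝ))
      ≤ ∫ t in (0:ℝ)..1, (inner ℝ (gradient f a) v + L * t * ‖v‖ ^ 2 : ℝ) := by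
    refine intervalIntegral.integral_mono_on (by norm_num)
      (hcont.intervalIntegrable _ _)
      ((continuous_const.add ((continuous_const.mul continuous_id).mul continuous_const)).intervalIntegrable _ _)
      hbound
  have hintval : (∫ t in (0:ℝ)..1, (inner ℝ (gradient f a) v + L * t * ‖v‖ ^ 2 : ℝ))
      = inner ℝ (gradient f a) v + L / 2 * ‖v‖ ^ 2 := by
    have hrw : ∀ t : ℝ, (inner ℝ (gradient f a) v + L * t * ‖v‖ ^ 2 : ℝ)
        = inner ℝ (gradient f a) v + (L * ‖v‖ ^ 2) * t := fun t => by ring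
    simp only [hrw]
    have hint2 : IntervalIntegrable (fun t : ℝ => L * ‖v‖ ^ 2 * t)
        MeasureTheory.volume 0 1 := Continuous.intervalIntegrable (by continuity) _ _
    rw [intervalIntegral.integral_add intervalIntegrable_const hint2,
      intervalIntegral.integral_const_mul, integral_id]
    norm_num
    ring
  have : f (a + (1:ℝ) • v) - f (a + (0:ℝ) • v) ≤ inner ℝ (gradient f a) v + L / 2 * ‖v‖ ^ 2 := by
    rw [ftc]; exact hintle.trans (le_of_eq hintval)
  have e0 : a + (0:ℝ) • v = a := by simp
  have e1 : a + (1:ℝ) • v = b := by simp [hv]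
  rw [e0, e1] at this
  linarith

lemma cocoercive (f : EuclideanSpace ℝ (Fin d) → ℝ) (L μ : ℝ) (hL : 0 < L) (hμ : 0 < μ)
    (hdiff : ContDiff ℝ 1 f)
    (hlip : ∀ x y, ‖gradient f x - gradient f y‖ ≤ L * ‖x - y‖)
    (hsc : ∀ x y, f x + inner ℝ (gradient f x) (y - x) + (μ / 2) * ‖x - y‖ ^ 2 ≤ f y)
    (x y : EuclideanSpace ℝ (Fin d)) :
    ‖gradient f x - gradient f y‖ ^ 2
      ≤ 2 * L * (f x - f y - inner ℝ (gradient f y) (x - y)) := by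
  set g := gradient f x - gradient f y with hg
  set z := x - L⁻¹ • g with hz
  have h1 := hsc y z
  have h2 := descent f L hL hdiff hlip x z
  have e1 : z - y = (x - y) - L⁻¹ • g := by rw [hz]; abel
  have e2 : z - x = -(L⁻¹ • g) := by rw [hz]; abel
  have i1 : (inner ℝ (gradient f y) (z - y) : ℝ)
      = inner ℝ (gradient f y) (x - y) - L⁻¹ * inner ℝ (gradient f y) g := by
    rw [e1, inner_sub_right, real_inner_smul_right]
  have i2 : (inner ℝ (gradient f x) (z - x) : ℝ) = -(L⁻¹ * inner ℝ (gradient f x) g) := by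
    rw [e2, inner_neg_right, real_inner_smul_right]
  have i3 : ‖z - x‖ ^ 2 = L⁻¹ ^ 2 * ‖g‖ ^ 2 := by
    rw [e2, norm_neg, norm_smul, mul_pow]
    simp [abs_of_pos (inv_pos.mpr hL)]
  have i4 : (inner ℝ (gradient f x) g : ℝ) - inner ℝ (gradient f y) g = ‖g‖ ^ 2 := by
    rw [← inner_sub_left, ← hg, real_inner_self_eq_norm_sq]
  have hnn : (0:ℝ) ≤ μ / 2 * ‖y - z‖ ^ 2 := by positivity
  have hLinv : L * L⁻¹ = 1 := mul_inv_cancel₀ hL.ne'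
  rw [i1] at h1
  rw [i2, i3] at h2
  have e5 : L / 2 * (L⁻¹ ^ 2 * ‖g‖ ^ 2) = L⁻¹ * ‖g‖ ^ 2 / 2 := by
    field_simp
  have e6 : L⁻¹ * inner ℝ (gradient f x) g - L⁻¹ * inner ℝ (gradient f y) g
      = L⁻¹ * ‖g‖ ^ 2 := by rw [← mul_sub, i4]
  rw [e5] at h2
  have key : L⁻¹ * ‖g‖ ^ 2 / 2 ≤ f x - f y - inner ℝ (gradient f y) (x - y) := by
    linarith
  have e7 : ‖g‖ ^ 2 = 2 * L * (L⁻¹ * ‖g‖ ^ 2 / 2) := by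
    field_simp
  rw [e7]
  exact mul_le_mul_of_nonneg_left key (by positivity)

end aux

theorem grad_variance_le (d N : ℕ) (hN : 1 ≤ N)
    (f : EuclideanSpace ℝ (Fin d) → ℝ) (L μ : ℝ) (hL : 0 < L) (hμ : 0 < μ)
    (hdiff : ContDiff ℝ 1 f)
    (hlip : ∀ x y, ‖gradient f x - gradient f y‖ ≤ L * ‖x - y‖)
    (hsc : ∀ x y, f x + inner ℝ (gradient f x) (y - x) + (μ / 2) * ‖x - y‖ ^ 2 ≤ f y)
    (x : Fin N → EuclideanSpace ℝ (Fin d)) :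
    ∑ i, ‖gradient f (x i) - (N : ℝ)⁻¹ • ∑ j, gradient f (x j)‖ ^ 2 ≤
      2 * L * ∑ i, (inner ℝ (gradient f (x i))
        (x i - (N : ℝ)⁻¹ • ∑ j, x j) : ℝ) := by
  have hN0 : (N : ℝ) ≠ 0 := Nat.cast_ne_zero.mpr (by omega)
  set g : Fin N → EuclideanSpace ℝ (Fin d) := fun i => gradient f (x i) with hgdef
  set gbar : EuclideanSpace ℝ (Fin d) := (N : ℝ)⁻¹ • ∑ j, g j with hgbar
  set xbar : EuclideanSpace ℝ (Fin d) := (N : ℝ)⁻¹ • ∑ j, x j with hxbar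
  set h : EuclideanSpace ℝ (Fin d) := gradient f xbar with hh
  -- the centered sums vanish
  have hsumg : ∑ i, (g i - gbar) = 0 := by
    rw [sum_sub_distrib, sum_const, card_univ, Fintype.card_fin, hgbar,
      ← Nat.cast_smul_eq_nsmul ℝ, smul_smul, mul_inv_cancel₀ hN0, one_smul, sub_self]
  have hsumx : ∑ i, (x i - xbar) = 0 := by
    rw [sum_sub_distrib, sum_const, card_univ, Fintype.card_fin, hxbar,
      ← Nat.cast_smul_eq_nsmul ℝ, smul_smul, mul_inv_cancel₀ hN0, one_smul, sub_self]
  -- step A : variance is minimized at the mean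
  have stepA : ∑ i, ‖g i - gbar‖ ^ 2 ≤ ∑ i, ‖g i - h‖ ^ 2 := by
    have expand : ∀ i, ‖g i - h‖ ^ 2
        = ‖g i - gbar‖ ^ 2 + 2 * inner ℝ (g i - gbar) (gbar - h) + ‖gbar - h‖ ^ 2 := by
      intro i
      have : g i - h = (g i - gbar) + (gbar - h) := by abel
      rw [this, norm_add_sq_real]
    have hcross : ∑ i, (inner ℝ (g i - gbar) (gbar - h) : ℝ) = 0 := by
      rw [← sum_inner, hsumg, inner_zero_left]
    calc ∑ i, ‖g i - gbar‖ ^ 2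
        ≤ ∑ i, ‖g i - gbar‖ ^ 2 + (↑N * ‖gbar - h‖ ^ 2) :=
          le_add_of_nonneg_right (by positivity)
      _ = ∑ i, ‖g i - h‖ ^ 2 := by
          rw [sum_congr rfl (fun i _ => expand i), sum_add_distrib, sum_add_distrib,
            ← mul_sum, hcross, sum_const, card_univ, Fintype.card_fin, nsmul_eq_mul]
          ring
  -- step B : cocoercivity at xbar
  have stepB : ∑ i, ‖g i - h‖ ^ 2 ≤ 2 * L * ∑ i, (f (x i) - f xbar) := by
    have hcross : ∑ i, (inner ℝ h (x i - xbar) : ℝ) = 0 := by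
      rw [← inner_sum, hsumx, inner_zero_right]
    calc ∑ i, ‖g i - h‖ ^ 2
        ≤ ∑ i, 2 * L * (f (x i) - f xbar - inner ℝ h (x i - xbar)) := by
          refine sum_le_sum fun i _ => ?_
          exact cocoercive f L μ hL hμ hdiff hlip hsc (x i) xbar
      _ = 2 * L * ∑ i, (f (x i) - f xbar) := by
          rw [← mul_sum]
          congr 1
          rw [sum_sub_distrib, hcross, sub_zero]
  -- step C : strong convexity bound on function values
  have stepC : ∑ i, (f (x i) - f xbar) ≤ ∑ i, (inner ℝ (g i) (x i - xbar) : ℝ) := by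
    refine sum_le_sum fun i _ => ?_
    have := hsc (x i) xbar
    have hnn : (0:ℝ) ≤ μ / 2 * ‖x i - xbar‖ ^ 2 := by positivity
    have hinner : (inner ℝ (g i) (xbar - x i) : ℝ) = -(inner ℝ (g i) (x i - xbar) : ℝ) := by
      rw [← inner_neg_right]; congr 1; abel
    rw [hinner] at this
    linarith
  have final : ∑ i, ‖g i - gbar‖ ^ 2 ≤ 2 * L * ∑ i, (inner ℝ (g i) (x i - xbar) : ℝ) := by
    calc ∑ i, ‖g i - gbar‖ ^ 2 ≤ 2 * L * ∑ i, (f (x i) - f xbar) := stepA.trans stepB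
      _ ≤ 2 * L * ∑ i, (inner ℝ (g i) (x i - xbar) : ℝ) := by
          apply mul_le_mul_of_nonneg_left stepC (by positivity)
  exact final
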